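/- If x is a Lyndon word over {a,b} (with order a < b), then φ(x) is also a Lyndon word, where φ(a) = aab, φ(b) = ab. -/

import Mathlib

/-- Strings over the binary alphabet `{a, b}`: `false` is `a`, `true` is `b`. -/
abbrev Word := List Bool

/-- `w` is primitive if it is not of the form `x^j` for any `j ≥ 2`. -/
def Primitive (w : Word) : Prop := ¬ ∃ (x : Word) (j : ℕ), 2 ≤ j ∧ w = (List.replicate j x).flatten

/-- `u` occurs in `w` at (0-indexed) position `i`. -/
def occursAt (u w : Word) (i : ℕ) : Prop :=
  i + u.length ≤ w.length ∧ (w.drop i).take u.length = u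

instance (u w : Word) (i : ℕ) : Decidable (occursAt u w i) := by
  unfold occursAt; infer_instance

/-- Fibonacci words: `F 1 = b`, `F 2 = a`, `F (k+1) = F k ++ F (k-1)`. -/
def F : ℕ → Word
  | 0 => []
  | 1 => [true]
  | 2 => [false]
  | (n+3) => F (n+2) ++ F (n+1)

/-- Fibonacci numbers with `f 1 = f 2 = 1`. -/
def f : ℕ → ℕ
  | 0 => 0
  | 1 => 1
  | (n+2) => f (n+1) + f n

/-- The morphism `φ(a) = aab`, `φ(b) = ab`. -/
def phi (w : Word) : Word := w.flatMap fun c => if c then [false, true] else [false, false, true]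

/-- Lexicographic order on words induced by `a < b` (a proper prefix is smaller). -/
def wlt (x y : Word) : Prop := List.Lex (· < ·) x y

/-- `u` is a border of `w`: a proper substring that is both a prefix and a suffix. -/
def IsBorder (u w : Word) : Prop := u ≠ w ∧ u <+: w ∧ u <:+ w

/-- `w` is a Lyndon word: it is smaller than all of its proper nonempty suffixes. -/
def IsLyndon (w : Word) : Prop := ∀ s : Word, s <:+ w → s ≠ [] → s ≠ w → wlt w s

/-- `fs` is the Lyndon factorization of `w`: a factorization into nonempty Lyndon
words that is lexicographically non-increasing (powers written as repetitions). -/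
def IsLyndonFactorization (w : Word) (fs : List Word) : Prop :=
  fs.flatten = w ∧ (∀ x ∈ fs, IsLyndon x ∧ x ≠ []) ∧ List.Chain' (fun x y => ¬ wlt x y) fs

/-- `ℓ 1 = ab`, `ℓ (k+1) = φ (ℓ k)`. -/
def ell : ℕ → Word
  | 0 => []
  | 1 => [false, true]
  | (n+2) => phi (ell (n+1))

lemma phi_cons (c : Bool) (t : Word) :
    phi (c :: t) = (if c then [false, true] else [false, false, true]) ++ phi t := rfl

lemma phi_nil : phi [] = [] := rfl

lemma phi_mono {x y : Word} (h : wlt x y) : wlt (phi x) (phi y) := by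
  induction h with
  | nil =>
    rename_i y l
    cases y <;> exact List.Lex.nil
  | @rel a l₁ b l₂ hr =>
    cases a <;> cases b
    · exact absurd hr (by decide)
    · exact List.Lex.cons (List.Lex.rel (by decide))
    · exact absurd hr (by decide)
    · exact absurd hr (by decide)
  | @cons a l₁ l₂ hlex ih =>
    cases a
    · exact List.Lex.cons (List.Lex.cons (List.Lex.cons ih))
    · exact List.Lex.cons (List.Lex.cons ih)

lemma suffix_append_cases {s u v : Word} (h : s <:+ u ++ v) :
    s <:+ v ∨ ∃ u', u' <:+ u ∧ s = u' ++ v := by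
  obtain ⟨p, hp⟩ := h
  rcases List.append_eq_append_iff.mp hp with ⟨a', hu, hs⟩ | ⟨c', _, hv⟩
  · exact Or.inr ⟨a', ⟨p, hu.symm⟩, hs⟩
  · exact Or.inl ⟨c', hv.symm⟩

lemma ne_of_suffix_tail {s' : Word} (c : Bool) {t : Word} (h : s' <:+ t) : s' ≠ c :: t := by
  intro e
  have := h.length_le
  rw [e] at this
  simp at this

lemma phi_suffix_classify : ∀ (x s : Word), s <:+ phi x →
    (∃ s', s' <:+ x ∧ s = phi s') ∨
    (∃ s', s' <:+ x ∧ s' ≠ x ∧ s = true :: phi s') ∨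
    (∃ s', (false :: s') <:+ x ∧ s' ≠ x ∧ s = false :: true :: phi s') := by
  intro x
  induction x with
  | nil =>
    intro s hs
    rw [phi_nil] at hs
    exact Or.inl ⟨[], List.nil_suffix, by simpa [phi_nil] using hs⟩
  | cons c t ih =>
    intro s hs
    rw [phi_cons] at hs
    rcases suffix_append_cases hs with h | ⟨u', hu', rfl⟩
    · rcases ih s h with ⟨s', h1, h2⟩ | ⟨s', h1, h2, h3⟩ | ⟨s', h1, h2, h3⟩
      · exact Or.inl ⟨s', h1.trans (List.suffix_cons c t), h2⟩
      · exact Or.inr (Or.inl ⟨s', h1.trans (List.suffix_cons c t), ne_of_suffix_tail c h1, h3⟩)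
      · exact Or.inr (Or.inr ⟨s', h1.trans (List.suffix_cons c t),
          ne_of_suffix_tail c ((List.suffix_cons false s').trans h1), h3⟩)
    · cases c
      · simp only [if_neg Bool.false_ne_true, Bool.false_eq_true] at *
        rcases List.suffix_cons_iff.mp hu' with rfl | hu'
        · exact Or.inl ⟨false :: t, List.suffix_refl _, by rw [phi_cons]; rfl⟩
        rcases List.suffix_cons_iff.mp hu' with rfl | hu'
        · exact Or.inr (Or.inr ⟨t, List.suffix_refl _, ne_of_suffix_tail false (List.suffix_refl t), rfl⟩)
        rcases List.suffix_cons_iff.mp hu' with rfl | hu'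
        · exact Or.inr (Or.inl ⟨t, List.suffix_cons false t, ne_of_suffix_tail false (List.suffix_refl t), rfl⟩)
        · rw [List.suffix_nil.mp hu']
          exact Or.inl ⟨t, List.suffix_cons false t, rfl⟩
      · simp only [if_pos rfl] at *
        rcases List.suffix_cons_iff.mp hu' with rfl | hu'
        · exact Or.inl ⟨true :: t, List.suffix_refl _, by rw [phi_cons]; rfl⟩
        rcases List.suffix_cons_iff.mp hu' with rfl | hu'
        · exact Or.inr (Or.inl ⟨t, List.suffix_cons true t, ne_of_suffix_tail true (List.suffix_refl t), rfl⟩)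
        · rw [List.suffix_nil.mp hu']
          exact Or.inl ⟨t, List.suffix_cons true t, rfl⟩

/-- `φ` maps Lyndon words to Lyndon words. -/
theorem stmt8 (x : Word) (h : IsLyndon x) : IsLyndon (phi x) := by
  intro s hs hne hnex
  rcases phi_suffix_classify x s hs with ⟨s', h1, rfl⟩ | ⟨s', h1, h2, rfl⟩ | ⟨s', h1, h2, rfl⟩
  · have hs'x : s' ≠ x := by rintro rfl; exact hnex rfl
    have hs'nil : s' ≠ [] := by rintro rfl; exact hne rfl
    exact phi_mono (h s' h1 hs'nil hs'x)
  · -- s = true :: phi s'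
    have hx : x ≠ [] := by
      rintro rfl
      rw [phi_nil] at hs
      exact absurd (List.suffix_nil.mp hs) (by simp)
    obtain ⟨c, t, rfl⟩ := List.exists_cons_of_ne_nil hx
    cases c
    · exact List.Lex.rel (by decide)
    · exact List.Lex.rel (by decide)
  · -- s = false :: true :: phi s', false :: s' <:+ x
    obtain ⟨p, hp⟩ := h1
    match p, hp with
    | [], rfl =>
      exact List.Lex.cons (List.Lex.rel (by decide))
    | d :: p', rfl =>
      have hsuf : (false :: s') ≠ d :: (p' ++ false :: s') := by
        intro e
        have : (false :: s').length = (d :: (p' ++ false :: s')).length := by rw [← e]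
        simp at this
        omega
      have hlyn := h (false :: s') ⟨d :: p', by simp⟩ (by simp) hsuf
      cases hlyn with
      | rel hr => cases d <;> exact absurd hr (by decide)
      | cons hl => exact List.Lex.cons (List.Lex.rel (by decide))
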